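/- (Quasi-periodicity of the elliptic Green function) Let x ∈ ℂ∖Γ, y ∈ ℝ∖{0}, and set φ̃(x, z, y) = −(1/(4π)) Σ_{γ∈Γ} |γ + x|^{−1} exp(−2π|γ + x||y|) χ(γ + x, z). Then for every z ∈ ℂ: φ̃(x, z + 1, y) = exp(α⁻¹(x − conj x)) · φ̃(x, z, y) and φ̃(x, z + τ, y) = exp(α⁻¹(x·conj τ − conj(x)·τ)) · φ̃(x, z, y). -/

import Mathlib

noncomputable section

/-- The lattice Γ = ℤ + τℤ, as a map ℤ × ℤ → ℂ. -/
def lat (τ : ℂ) (p : ℤ × ℤ) : ℂ := (p.1 : ℂ) + (p.2 : ℂ) * τ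

/-- α = Im τ / π. -/
def alf (τ : ℂ) : ℝ := τ.im / Real.pi

/-- The character χ(γ, x) = exp(α⁻¹(γ·conj x − conj γ·x)). -/
def chi (τ γ x : ℂ) : ℂ :=
  Complex.exp (((alf τ)⁻¹ : ℝ) * (γ * (starRingEnd ℂ) x - (starRingEnd ℂ) γ * x))

/-- The elliptic Green function
φ̃(x, z, y) = −(1/4π) Σ_{γ∈Γ} |γ+x|⁻¹ exp(−2π|γ+x||y|) χ(γ+x, z). -/
def phiT (τ x z : ℂ) (y : ℝ) : ℂ :=
  -(1 / (4 * Real.pi) : ℝ) * ∑' p : ℤ × ℤ,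
    ((‖lat τ p + x‖ : ℝ) : ℂ)⁻¹ *
      (Real.exp (-2 * Real.pi * ‖lat τ p + x‖ * |y|) : ℂ) *
      chi τ (lat τ p + x) z

/-- Quasi-periodicity of the elliptic Green function:
φ̃(x, z+1, y) = exp(α⁻¹(x − conj x)) φ̃(x, z, y) and
φ̃(x, z+τ, y) = exp(α⁻¹(x conj τ − conj x τ)) φ̃(x, z, y). -/
theorem phiT_quasi_periodicity (τ : ℂ) (hτ : 0 < τ.im) (x : ℂ)
    (hx : x ∉ Set.range (lat τ)) (y : ℝ) (hy : y ≠ 0) (z : ℂ) :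
    phiT τ x (z + 1) y =
      Complex.exp (((alf τ)⁻¹ : ℝ) * (x - (starRingEnd ℂ) x)) * phiT τ x z y ∧
    phiT τ x (z + τ) y =
      Complex.exp (((alf τ)⁻¹ : ℝ) * (x * (starRingEnd ℂ) τ - (starRingEnd ℂ) x * τ)) *
        phiT τ x z y := by
  have hπ : (Real.pi : ℝ) ≠ 0 := Real.pi_ne_zero
  have him : τ.im ≠ 0 := ne_of_gt hτ
  set c : ℂ := (((alf τ)⁻¹ : ℝ) : ℂ) with hc
  have key : c * (τ - (starRingEnd ℂ) τ) = 2 * (Real.pi : ℂ) * Complex.I := by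
    rw [Complex.sub_conj, hc]
    simp only [alf]
    have him' : (τ.im : ℂ) ≠ 0 := by exact_mod_cast him
    have hπ' : (Real.pi : ℂ) ≠ 0 := by exact_mod_cast hπ
    push_cast
    field_simp
  -- pointwise identity for the period 1
  have e1 : ∀ p : ℤ × ℤ, chi τ (lat τ p + x) (z + 1)
      = Complex.exp (c * (x - (starRingEnd ℂ) x)) * chi τ (lat τ p + x) z := by
    intro p
    unfold chi
    rw [← Complex.exp_add]
    have hA : c * ((lat τ p + x) * (starRingEnd ℂ) (z + 1)
          - (starRingEnd ℂ) (lat τ p + x) * (z + 1))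
        = (p.2 : ℂ) * (2 * (Real.pi : ℂ) * Complex.I)
          + (c * (x - (starRingEnd ℂ) x)
            + c * ((lat τ p + x) * (starRingEnd ℂ) z - (starRingEnd ℂ) (lat τ p + x) * z)) := by
      rw [← key]
      simp only [lat, map_add, map_mul, map_one, map_intCast]
      ring
    rw [hA, Complex.exp_add, Complex.exp_int_mul_two_pi_mul_I, one_mul]
  -- pointwise identity for the period τ
  have e2 : ∀ p : ℤ × ℤ, chi τ (lat τ p + x) (z + τ)
      = Complex.exp (c * (x * (starRingEnd ℂ) τ - (starRingEnd ℂ) x * τ))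
        * chi τ (lat τ p + x) z := by
    intro p
    unfold chi
    rw [← Complex.exp_add]
    have hA : c * ((lat τ p + x) * (starRingEnd ℂ) (z + τ)
          - (starRingEnd ℂ) (lat τ p + x) * (z + τ))
        = ((-p.1 : ℤ) : ℂ) * (2 * (Real.pi : ℂ) * Complex.I)
          + (c * (x * (starRingEnd ℂ) τ - (starRingEnd ℂ) x * τ)
            + c * ((lat τ p + x) * (starRingEnd ℂ) z - (starRingEnd ℂ) (lat τ p + x) * z)) := by
      rw [← key]
      simp only [lat, map_add, map_mul, map_one, map_intCast]
      push_cast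
      ring
    rw [hA, Complex.exp_add, Complex.exp_int_mul_two_pi_mul_I, one_mul]
  constructor
  · unfold phiT
    rw [show (∑' p : ℤ × ℤ,
        ((‖lat τ p + x‖ : ℝ) : ℂ)⁻¹ *
          (Real.exp (-2 * Real.pi * ‖lat τ p + x‖ * |y|) : ℂ) *
          chi τ (lat τ p + x) (z + 1))
      = ∑' p : ℤ × ℤ, Complex.exp (c * (x - (starRingEnd ℂ) x)) *
          (((‖lat τ p + x‖ : ℝ) : ℂ)⁻¹ *
            (Real.exp (-2 * Real.pi * ‖lat τ p + x‖ * |y|) : ℂ) *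
            chi τ (lat τ p + x) z) from tsum_congr fun p => by rw [e1 p]; ring,
      tsum_mul_left]
    ring
  · unfold phiT
    rw [show (∑' p : ℤ × ℤ,
        ((‖lat τ p + x‖ : ℝ) : ℂ)⁻¹ *
          (Real.exp (-2 * Real.pi * ‖lat τ p + x‖ * |y|) : ℂ) *
          chi τ (lat τ p + x) (z + τ))
      = ∑' p : ℤ × ℤ, Complex.exp (c * (x * (starRingEnd ℂ) τ - (starRingEnd ℂ) x * τ)) *
          (((‖lat τ p + x‖ : ℝ) : ℂ)⁻¹ *
            (Real.exp (-2 * Real.pi * ‖lat τ p + x‖ * |y|) : ℂ) *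
            chi τ (lat τ p + x) z) from tsum_congr fun p => by rw [e2 p]; ring,
      tsum_mul_left]
    ring
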